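/- Let f = x₀²y₀ − (x₀+x₁)²y₁ + x₁²y₂ and let J ⊂ k[α₀,α₁,β₀,β₁,β₂] be the ideal generated by Ann(f)₂. Then β₀ is in the saturation of J with respect to the irrelevant maximal ideal; concretely, α₀³β₀, α₁β₀, β₀², β₀β₁, β₀β₂ all lie in J. -/

import Mathlib

open MvPolynomial

noncomputable section

/-- The differential operator with constant coefficients corresponding to a monomial
exponent `m` (composition of partial derivatives). -/
def monOp (k : Type*) [CommSemiring k] {n : ℕ} (m : Fin n →₀ ℕ) :
    Module.End k (MvPolynomial (Fin n) k) :=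
  (List.ofFn fun i : Fin n =>
    ((pderiv i).toLinearMap : Module.End k (MvPolynomial (Fin n) k)) ^ m i).prod

/-- Apolarity contraction: the linear map `θ ↦ θ ⌟ f`, where a dual polynomial `θ`
acts on `f` as a differential operator with constant coefficients. -/
def contractMap {k : Type*} [CommSemiring k] {n : ℕ} (f : MvPolynomial (Fin n) k) :
    MvPolynomial (Fin n) k →ₗ[k] MvPolynomial (Fin n) k :=
  (Finsupp.lsum k fun m => LinearMap.toSpanSingleton k _ ((monOp k m) f)) ∘ₗ
    (AddMonoidAlgebra.coeffLinearEquiv k).toLinearMap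

/-- The irrelevant maximal ideal `(X 0, …, X (n-1))`. -/
def irrel (k : Type*) [CommSemiring k] (n : ℕ) : Ideal (MvPolynomial (Fin n) k) :=
  Ideal.span (Set.range X)

/-- Saturation of an ideal with respect to the irrelevant maximal ideal. -/
def satur {k : Type*} [CommRing k] {n : ℕ} (I : Ideal (MvPolynomial (Fin n) k)) :
    Ideal (MvPolynomial (Fin n) k) :=
  ⨆ m : ℕ, Submodule.colon I ((irrel k n ^ m : Ideal (MvPolynomial (Fin n) k)) : Submodule _ _)

/-- An ideal is saturated (with respect to the irrelevant maximal ideal). -/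
def IsSat {k : Type*} [CommRing k] {n : ℕ} (I : Ideal (MvPolynomial (Fin n) k)) : Prop :=
  Submodule.colon I ((irrel k n : Ideal _) : Submodule _ _) ≤ I

/-- An ideal is homogeneous. -/
def IsHomogIdeal {k : Type*} [CommSemiring k] {n : ℕ}
    (I : Ideal (MvPolynomial (Fin n) k)) : Prop :=
  ∀ g ∈ I, ∀ j : ℕ, homogeneousComponent j g ∈ I

/-- Hilbert function of `S/I` in degree `i`. -/
def HFq (k : Type*) [Field k] {n : ℕ} (I : Ideal (MvPolynomial (Fin n) k)) (i : ℕ) : ℕ :=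
  Module.finrank k (homogeneousSubmodule (Fin n) k i) -
    Module.finrank k (Submodule.restrictScalars k I ⊓ homogeneousSubmodule (Fin n) k i :
      Submodule k (MvPolynomial (Fin n) k))

/-- Hilbert function of the apolar algebra `Sym V⋆ / Ann(f)` in degree `i`. -/
def HFapolar {k : Type*} [Field k] {n : ℕ} (f : MvPolynomial (Fin n) k) (i : ℕ) : ℕ :=
  Module.finrank k (homogeneousSubmodule (Fin n) k i) -
    Module.finrank k (LinearMap.ker (contractMap f) ⊓ homogeneousSubmodule (Fin n) k i :
      Submodule k (MvPolynomial (Fin n) k))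

/-- Zariski closure of a subset of a `k`-vector space: common zeros of all polynomial
functions (elements of the subalgebra of functions generated by linear functionals)
vanishing on the subset. -/
def zcl (k : Type*) {M : Type*} [Field k] [AddCommGroup M] [Module k M] (A : Set M) : Set M :=
  {p | ∀ F : M → k,
    F ∈ Algebra.adjoin k (Set.range fun φ : Module.Dual k M => (φ : M → k)) →
    (∀ a ∈ A, F a = 0) → F p = 0}

end

section Aux
variable {k : Type*} [Field k]

lemma aux_contractMap_X_mul_X (f : MvPolynomial (Fin 5) k) (i j : Fin 5) :
    contractMap f (X i * X j) =
      monOp k (Finsupp.single i 1 + Finsupp.single j 1) f := by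
  have h : (X i * X j : MvPolynomial (Fin 5) k)
      = monomial (Finsupp.single i 1 + Finsupp.single j 1) 1 := by
    rw [X, X, monomial_mul, one_mul]
  rw [h]
  show (Finsupp.lsum k fun m => LinearMap.toSpanSingleton k _ ((monOp k m) f))
    (Finsupp.single (Finsupp.single i 1 + Finsupp.single j 1) (1 : k)) = _
  rw [Finsupp.lsum_single]
  exact one_smul _ _

lemma aux_mulX (g : MvPolynomial (Fin 5) k) (K : Ideal (MvPolynomial (Fin 5) k))
    (hgi : ∀ i : Fin 5, g * X i ∈ K) : Ideal.span {g} * irrel k 5 ≤ K := by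
  rw [Ideal.mul_le]
  intro r hr s hs
  rw [Ideal.mem_span_singleton] at hr
  obtain ⟨c, rfl⟩ := hr
  induction hs using Submodule.span_induction with
  | mem x hx =>
      obtain ⟨i, rfl⟩ := hx
      have : g * c * X i = c * (g * X i) := by ring
      rw [this]
      exact K.mul_mem_left c (hgi i)
  | zero => simp
  | add x y _ _ hx hy => rw [mul_add]; exact K.add_mem hx hy
  | smul t x _ hx => rw [smul_eq_mul, mul_comm t x, ← mul_assoc]; exact K.mul_mem_right t hx

end Aux


/-- with `J` the ideal generated by the degree 2 part of the apolar ideal of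
`f = x₀²y₀ − (x₀+x₁)²y₁ + x₁²y₂`, the element `β₀` lies in the saturation of `J` with
respect to the irrelevant maximal ideal; concretely `α₀³β₀, α₁β₀, β₀², β₀β₁, β₀β₂ ∈ J`.
In the dual ring `k[α₀,α₁,β₀,β₁,β₂]`, `α₀ = X 0`, `α₁ = X 1`, `βᵢ = X (2+i)`. -/
theorem stmt3 (k : Type*) [Field k] [IsAlgClosed k] [CharZero k] :
    let x0 : MvPolynomial (Fin 5) k := X 0
    let x1 : MvPolynomial (Fin 5) k := X 1
    let y0 : MvPolynomial (Fin 5) k := X 2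
    let y1 : MvPolynomial (Fin 5) k := X 3
    let y2 : MvPolynomial (Fin 5) k := X 4
    let f := x0 ^ 2 * y0 - (x0 + x1) ^ 2 * y1 + x1 ^ 2 * y2
    let a0 : MvPolynomial (Fin 5) k := X 0
    let a1 : MvPolynomial (Fin 5) k := X 1
    let b0 : MvPolynomial (Fin 5) k := X 2
    let b1 : MvPolynomial (Fin 5) k := X 3
    let b2 : MvPolynomial (Fin 5) k := X 4
    let J : Ideal (MvPolynomial (Fin 5) k) :=
      Ideal.span ((LinearMap.ker (contractMap f) ⊓ homogeneousSubmodule (Fin 5) k 2 :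
        Submodule k (MvPolynomial (Fin 5) k)) : Set (MvPolynomial (Fin 5) k))
    b0 ∈ satur J ∧
      a0 ^ 3 * b0 ∈ J ∧ a1 * b0 ∈ J ∧ b0 ^ 2 ∈ J ∧ b0 * b1 ∈ J ∧ b0 * b2 ∈ J := by
  intro x0 x1 y0 y1 y2 f a0 a1 b0 b1 b2 J
  -- membership criterion
  have hmem : ∀ g : MvPolynomial (Fin 5) k,
      contractMap f g = 0 → g.IsHomogeneous 2 → g ∈ J := by
    intro g h1 h2
    exact Ideal.subset_span (Submodule.mem_inf.mpr ⟨LinearMap.mem_ker.mpr h1, h2⟩)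
  have hhom2 : ∀ i j : Fin 5, (X i * X j : MvPolynomial (Fin 5) k).IsHomogeneous 2 := by
    intro i j
    simpa using (isHomogeneous_X k i).mul (isHomogeneous_X k j)
  -- contraction computations
  have h1 : a1 * b0 ∈ J := by
    refine hmem _ ?_ (hhom2 1 2)
    rw [aux_contractMap_X_mul_X]
    simp (config := { decide := true }) [monOp, List.ofFn_succ, Finsupp.single_apply,
      pow_succ, f, x0, x1, y0, y1, y2, Pi.single_apply]
  have h2 : b0 ^ 2 ∈ J := by
    have : b0 ^ 2 = X 2 * X 2 := by ring
    rw [this]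
    refine hmem _ ?_ (hhom2 2 2)
    rw [aux_contractMap_X_mul_X]
    simp (config := { decide := true }) [monOp, List.ofFn_succ, Finsupp.single_apply,
      pow_succ, f, x0, x1, y0, y1, y2, Pi.single_apply]
  have h3 : b0 * b1 ∈ J := by
    refine hmem _ ?_ (hhom2 2 3)
    rw [aux_contractMap_X_mul_X]
    simp (config := { decide := true }) [monOp, List.ofFn_succ, Finsupp.single_apply,
      pow_succ, f, x0, x1, y0, y1, y2, Pi.single_apply]
  have h4 : b0 * b2 ∈ J := by
    refine hmem _ ?_ (hhom2 2 4)
    rw [aux_contractMap_X_mul_X]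
    simp (config := { decide := true }) [monOp, List.ofFn_succ, Finsupp.single_apply,
      pow_succ, f, x0, x1, y0, y1, y2, Pi.single_apply]
  have h5 : a0 * b2 ∈ J := by
    refine hmem _ ?_ (hhom2 0 4)
    rw [aux_contractMap_X_mul_X]
    simp (config := { decide := true }) [monOp, List.ofFn_succ, Finsupp.single_apply,
      pow_succ, f, x0, x1, y0, y1, y2, Pi.single_apply]
  have h6 : a1 * b1 - a0 * b1 ∈ J := by
    refine hmem _ ?_ (((hhom2 1 3).sub (hhom2 0 3)))
    rw [map_sub, aux_contractMap_X_mul_X, aux_contractMap_X_mul_X]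
    simp (config := { decide := true }) [monOp, List.ofFn_succ, Finsupp.single_apply,
      pow_succ, f, x0, x1, y0, y1, y2, Pi.single_apply]
  have h7 : a0 * b0 + a0 * b1 + a1 * b2 ∈ J := by
    refine hmem _ ?_ (((hhom2 0 2).add (hhom2 0 3)).add (hhom2 1 4))
    rw [map_add, map_add, aux_contractMap_X_mul_X, aux_contractMap_X_mul_X,
      aux_contractMap_X_mul_X]
    simp (config := { decide := true }) [monOp, List.ofFn_succ, Finsupp.single_apply,
      pow_succ, f, x0, x1, y0, y1, y2, Pi.single_apply]
    ring
  have hcube : a0 ^ 3 * b0 ∈ J := by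
    have hid : a0 ^ 3 * b0 =
        (a0 ^ 2 - a0 * a1) * (a0 * b0 + a0 * b1 + a1 * b2)
          - (a0 * a1 - a1 ^ 2) * (a0 * b2)
          + a0 ^ 2 * (a1 * b1 - a0 * b1) + a0 ^ 2 * (a1 * b0) := by ring
    rw [hid]
    exact add_mem (add_mem (sub_mem (J.mul_mem_left _ h7) (J.mul_mem_left _ h5))
      (J.mul_mem_left _ h6)) (J.mul_mem_left _ h1)
  refine ⟨?_, hcube, h1, h2, h3, h4⟩
  -- saturation
  have A1 : Ideal.span {b0} * irrel k 5 ≤ J ⊔ Ideal.span {a0 * b0} := by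
    refine aux_mulX _ _ ?_
    intro i
    fin_cases i <;>
      simp only [Fin.isValue, Fin.mk_zero, Fin.mk_one,
        show (⟨2, by omega⟩ : Fin 5) = 2 from rfl, show (⟨3, by omega⟩ : Fin 5) = 3 from rfl,
        show (⟨4, by omega⟩ : Fin 5) = 4 from rfl]
    · have : b0 * X 0 = a0 * b0 := by rw [mul_comm]
      rw [this]
      exact Ideal.mem_sup_right (Ideal.mem_span_singleton_self _)
    · have : b0 * X 1 = a1 * b0 := by ring
      rw [this]; exact Ideal.mem_sup_left h1
    · have : b0 * X 2 = b0 ^ 2 := by ring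
      rw [this]; exact Ideal.mem_sup_left h2
    · exact Ideal.mem_sup_left h3
    · exact Ideal.mem_sup_left h4
  have A2 : Ideal.span {a0 * b0} * irrel k 5 ≤ J ⊔ Ideal.span {a0 ^ 2 * b0} := by
    refine aux_mulX _ _ ?_
    intro i
    fin_cases i <;>
      simp only [Fin.isValue, Fin.mk_zero, Fin.mk_one,
        show (⟨2, by omega⟩ : Fin 5) = 2 from rfl, show (⟨3, by omega⟩ : Fin 5) = 3 from rfl,
        show (⟨4, by omega⟩ : Fin 5) = 4 from rfl]
    · have : a0 * b0 * X 0 = a0 ^ 2 * b0 := by ring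
      rw [this]; exact Ideal.mem_sup_right (Ideal.mem_span_singleton_self _)
    · have : a0 * b0 * X 1 = a0 * (a1 * b0) := by ring
      rw [this]; exact Ideal.mem_sup_left (J.mul_mem_left _ h1)
    · have : a0 * b0 * X 2 = a0 * b0 ^ 2 := by ring
      rw [this]; exact Ideal.mem_sup_left (J.mul_mem_left _ h2)
    · have : a0 * b0 * X 3 = a0 * (b0 * b1) := by ring
      rw [this]; exact Ideal.mem_sup_left (J.mul_mem_left _ h3)
    · have : a0 * b0 * X 4 = a0 * (b0 * b2) := by ring
      rw [this]; exact Ideal.mem_sup_left (J.mul_mem_left _ h4)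
  have A3 : Ideal.span {a0 ^ 2 * b0} * irrel k 5 ≤ J := by
    refine aux_mulX _ _ ?_
    intro i
    fin_cases i <;>
      simp only [Fin.isValue, Fin.mk_zero, Fin.mk_one,
        show (⟨2, by omega⟩ : Fin 5) = 2 from rfl, show (⟨3, by omega⟩ : Fin 5) = 3 from rfl,
        show (⟨4, by omega⟩ : Fin 5) = 4 from rfl]
    · have : a0 ^ 2 * b0 * X 0 = a0 ^ 3 * b0 := by ring
      rw [this]; exact hcube
    · have : a0 ^ 2 * b0 * X 1 = a0 ^ 2 * (a1 * b0) := by ring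
      rw [this]; exact J.mul_mem_left _ h1
    · have : a0 ^ 2 * b0 * X 2 = a0 ^ 2 * b0 ^ 2 := by ring
      rw [this]; exact J.mul_mem_left _ h2
    · have : a0 ^ 2 * b0 * X 3 = a0 ^ 2 * (b0 * b1) := by ring
      rw [this]; exact J.mul_mem_left _ h3
    · have : a0 ^ 2 * b0 * X 4 = a0 ^ 2 * (b0 * b2) := by ring
      rw [this]; exact J.mul_mem_left _ h4
  have B : Ideal.span {b0} * irrel k 5 ^ 3 ≤ J := by
    have e : Ideal.span {b0} * irrel k 5 ^ 3
        = Ideal.span {b0} * irrel k 5 * irrel k 5 * irrel k 5 := by ring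
    rw [e]
    calc Ideal.span {b0} * irrel k 5 * irrel k 5 * irrel k 5
        ≤ (J ⊔ Ideal.span {a0 * b0}) * irrel k 5 * irrel k 5 := by
          exact Ideal.mul_mono_left (Ideal.mul_mono_left A1)
      _ = (J * irrel k 5 ⊔ Ideal.span {a0 * b0} * irrel k 5) * irrel k 5 := by
          rw [Ideal.sup_mul]
      _ ≤ (J ⊔ Ideal.span {a0 ^ 2 * b0}) * irrel k 5 := by
          exact Ideal.mul_mono_left (sup_le (le_trans Ideal.mul_le_left le_sup_left) A2)
      _ = J * irrel k 5 ⊔ Ideal.span {a0 ^ 2 * b0} * irrel k 5 := by rw [Ideal.sup_mul]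
      _ ≤ J := sup_le (le_trans Ideal.mul_le_left le_rfl) A3
  have hcolon : b0 ∈ Submodule.colon J ((irrel k 5 ^ 3 : Ideal _) : Submodule _ _) := by
    rw [Submodule.mem_colon]
    intro p hp
    rw [smul_eq_mul]
    exact B (Ideal.mul_mem_mul (Ideal.mem_span_singleton_self b0) hp)
  exact Submodule.mem_iSup_of_mem 3 hcolon
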